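/- Strong normalization: every term typable in the simply typed distributive λ-calculus (with typing up to the distributivity isomorphism) is strongly normalizing with respect to the distributive reduction. -/

import Mathlib

inductive Tm : Type
| var : ℕ → Tm
| lam : Tm → Tm
| app : Tm → Tm → Tm
| pair : Tm → Tm → Tm
| p1 : Tm → Tm
| p2 : Tm → Tm

namespace Tm

/-- Renaming of de Bruijn indices. -/
def rename (f : ℕ → ℕ) : Tm → Tm
| var n => var (f n)
| lam t => lam (t.rename (fun n => match n with | 0 => 0 | n+1 => f n + 1))
| app t s => app (t.rename f) (s.rename f)
| pair t s => pair (t.rename f) (s.rename f)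
| p1 t => p1 (t.rename f)
| p2 t => p2 (t.rename f)

/-- Capture-avoiding simultaneous substitution. -/
def subst (σ : ℕ → Tm) : Tm → Tm
| var n => σ n
| lam t => lam (t.subst (fun n => match n with | 0 => var 0 | n+1 => (σ n).rename Nat.succ))
| app t s => app (t.subst σ) (s.subst σ)
| pair t s => pair (t.subst σ) (s.subst σ)
| p1 t => p1 (t.subst σ)
| p2 t => p2 (t.subst σ)

/-- Substitution of the single (outermost) free variable: t[x := s]. -/
def subst1 (t s : Tm) : Tm :=
  t.subst (fun n => match n with | 0 => s | n+1 => var n)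

/-- One-step reduction of the distributive λ-calculus. -/
inductive Step : Tm → Tm → Prop
| beta (t s) : Step (app (lam t) s) (t.subst1 s)
| proj1 (t1 t2) : Step (p1 (pair t1 t2)) t1
| proj2 (t1 t2) : Step (p2 (pair t1 t2)) t2
| pairApp (t s u) : Step (app (pair t s) u) (pair (app t u) (app s u))
| projLam1 (t) : Step (p1 (lam t)) (lam (p1 t))
| projLam2 (t) : Step (p2 (lam t)) (lam (p2 t))
| lam_cong {t t'} : Step t t' → Step (lam t) (lam t')
| appL {t t' s} : Step t t' → Step (app t s) (app t' s)
| appR {t s s'} : Step s s' → Step (app t s) (app t s')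
| pairL {t t' s} : Step t t' → Step (pair t s) (pair t' s)
| pairR {t s s'} : Step s s' → Step (pair t s) (pair t s')
| p1_cong {t t'} : Step t t' → Step (p1 t) (p1 t')
| p2_cong {t t'} : Step t t' → Step (p2 t) (p2 t')

/-- Many-step reduction. -/
def Steps : Tm → Tm → Prop := Relation.ReflTransGen Step

/-- A term is normal when no rule applies anywhere in it. -/
def Normal (t : Tm) : Prop := ¬ ∃ s, Step t s

/-- All free variables are < k. -/
def closedUnder : ℕ → Tm → Prop
| k, var n => n < k
| k, lam t => closedUnder (k+1) t
| k, app t s => closedUnder k t ∧ closedUnder k s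
| k, pair t s => closedUnder k t ∧ closedUnder k s
| k, p1 t => closedUnder k t
| k, p2 t => closedUnder k t

def Closed (t : Tm) : Prop := closedUnder 0 t

/-- Values: variables, abstractions, pairs. -/
def IsValue : Tm → Prop
| var _ => True
| lam _ => True
| pair _ _ => True
| _ => False

/-- Neutral terms: variables, applications, projections. -/
def Neutral : Tm → Prop
| var _ => True
| app _ _ => True
| p1 _ => True
| p2 _ => True
| _ => False

/-- Strong normalization: every reduction sequence is finite. -/
def SN (t : Tm) : Prop := Acc (fun a b => Step b a) t

end Tm

inductive Ty : Type
| base : Ty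
| arr : Ty → Ty → Ty
| conj : Ty → Ty → Ty

/-- The least congruence containing distributivity A ⇒ (B ∧ C) ≡ (A ⇒ B) ∧ (A ⇒ C). -/
inductive Iso : Ty → Ty → Prop
| refl (A) : Iso A A
| symm {A B} : Iso A B → Iso B A
| trans {A B C} : Iso A B → Iso B C → Iso A C
| distr (A B C) : Iso (Ty.arr A (Ty.conj B C)) (Ty.conj (Ty.arr A B) (Ty.arr A C))
| arrL {A C} (B) : Iso A C → Iso (Ty.arr A B) (Ty.arr C B)
| arrR {B C} (A) : Iso B C → Iso (Ty.arr A B) (Ty.arr A C)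
| conjL {A C} (B) : Iso A C → Iso (Ty.conj A B) (Ty.conj C B)
| conjR {B C} (A) : Iso B C → Iso (Ty.conj A B) (Ty.conj A C)

/-- Typing, with contexts as lists of types (de Bruijn), including the conversion rule for ≡. -/
inductive Typing : List Ty → Tm → Ty → Prop
| var {Γ n A} : Γ[n]? = some A → Typing Γ (Tm.var n) A
| lam {Γ t A B} : Typing (A :: Γ) t B → Typing Γ (Tm.lam t) (Ty.arr A B)
| app {Γ t s A B} : Typing Γ t (Ty.arr A B) → Typing Γ s A → Typing Γ (Tm.app t s) B
| pair {Γ t s A B} : Typing Γ t A → Typing Γ s B → Typing Γ (Tm.pair t s) (Ty.conj A B)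
| p1 {Γ t A B} : Typing Γ t (Ty.conj A B) → Typing Γ (Tm.p1 t) A
| p2 {Γ t A B} : Typing Γ t (Ty.conj A B) → Typing Γ (Tm.p2 t) B
| iso {Γ t A B} : Typing Γ t A → Iso A B → Typing Γ t B

/-- Reducibility interpretation of types. -/
def Red : Ty → Tm → Prop
| Ty.base, t => Tm.SN t
| Ty.arr A B, t => ∀ s, Red A s → Red B (Tm.app t s)
| Ty.conj A B, t => Red A (Tm.p1 t) ∧ Red B (Tm.p2 t)

namespace Tm

def liftR (f : ℕ → ℕ) : ℕ → ℕ := fun n => match n with | 0 => 0 | n+1 => f n + 1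
def liftS (σ : ℕ → Tm) : ℕ → Tm := fun n => match n with | 0 => var 0 | n+1 => (σ n).rename Nat.succ
def sub1 (s : Tm) : ℕ → Tm := fun n => match n with | 0 => s | n+1 => var n
def scons (s : Tm) (σ : ℕ → Tm) : ℕ → Tm := fun n => match n with | 0 => s | n+1 => σ n

lemma rename_lam (f t) : rename f (lam t) = lam (rename (liftR f) t) := rfl
lemma subst_lam (σ t) : subst σ (lam t) = lam (subst (liftS σ) t) := rfl
lemma subst1_def (t s : Tm) : t.subst1 s = t.subst (sub1 s) := rfl

lemma rename_rename (t : Tm) : ∀ f g, (t.rename f).rename g = t.rename (g ∘ f) := by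
  induction t with
  | var n => intros; rfl
  | lam t ih =>
      intro f g
      simp only [rename, ih]
      exact congrArg (fun g => lam (rename g t)) (funext fun n => by cases n <;> rfl)
  | app t s iht ihs => intro f g; simp [rename, iht, ihs]
  | pair t s iht ihs => intro f g; simp [rename, iht, ihs]
  | p1 t ih => intro f g; simp [rename, ih]
  | p2 t ih => intro f g; simp [rename, ih]

lemma subst_rename (t : Tm) : ∀ (f : ℕ → ℕ) (σ : ℕ → Tm), (t.rename f).subst σ = t.subst (σ ∘ f) := by
  induction t with
  | var n => intros; rfl
  | lam t ih =>
      intro f σ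
      simp only [rename, subst, ih]
      exact congrArg (fun g => lam (subst g t)) (funext fun n => by cases n <;> rfl)
  | app t s iht ihs => intro f σ; simp [rename, subst, iht, ihs]
  | pair t s iht ihs => intro f σ; simp [rename, subst, iht, ihs]
  | p1 t ih => intro f σ; simp [rename, subst, ih]
  | p2 t ih => intro f σ; simp [rename, subst, ih]

lemma rename_subst (t : Tm) : ∀ (σ : ℕ → Tm) (f : ℕ → ℕ), (t.subst σ).rename f = t.subst (fun n => (σ n).rename f) := by
  induction t with
  | var n => intros; rfl
  | lam t ih =>
      intro σ f
      simp only [subst, rename, ih]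
      refine congrArg (fun g => lam (subst g t)) (funext fun n => ?_)
      cases n with
      | zero => rfl
      | succ n =>
          show ((σ n).rename Nat.succ).rename (liftR f) = ((σ n).rename f).rename Nat.succ
          simp only [rename_rename]
          congr 1
  | app t s iht ihs => intro σ f; simp [subst, rename, iht, ihs]
  | pair t s iht ihs => intro σ f; simp [subst, rename, iht, ihs]
  | p1 t ih => intro σ f; simp [subst, rename, ih]
  | p2 t ih => intro σ f; simp [subst, rename, ih]

lemma subst_subst (t : Tm) : ∀ (σ τ : ℕ → Tm), (t.subst σ).subst τ = t.subst (fun n => (σ n).subst τ) := by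
  induction t with
  | var n => intros; rfl
  | lam t ih =>
      intro σ τ
      simp only [subst, ih]
      refine congrArg (fun g => lam (subst g t)) (funext fun n => ?_)
      cases n with
      | zero => rfl
      | succ n =>
          show ((σ n).rename Nat.succ).subst (liftS τ) = ((σ n).subst τ).rename Nat.succ
          rw [subst_rename, rename_subst]
          rfl
  | app t s iht ihs => intro σ τ; simp [subst, iht, ihs]
  | pair t s iht ihs => intro σ τ; simp [subst, iht, ihs]
  | p1 t ih => intro σ τ; simp [subst, ih]
  | p2 t ih => intro σ τ; simp [subst, ih]

lemma subst_var (t : Tm) : t.subst var = t := by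
  induction t with
  | var n => rfl
  | lam t ih =>
      show lam (t.subst _) = lam t
      rw [show (fun n => match n with | 0 => var 0 | (n+1 : ℕ) => (var n).rename Nat.succ) = var by
        funext n; cases n <;> rfl, ih]
  | app t s iht ihs => simp [subst, iht, ihs]
  | pair t s iht ihs => simp [subst, iht, ihs]
  | p1 t ih => simp [subst, ih]
  | p2 t ih => simp [subst, ih]

lemma subst1_subst (t s : Tm) (σ : ℕ → Tm) :
    (t.subst1 s).subst σ = (t.subst (liftS σ)).subst1 (s.subst σ) := by
  simp only [subst1_def, subst_subst]
  congr 1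
  funext n
  cases n with
  | zero => rfl
  | succ n =>
      show σ n = ((σ n).rename Nat.succ).subst (sub1 (s.subst σ))
      rw [subst_rename]
      exact (subst_var (σ n)).symm

lemma subst1_rename (t s : Tm) (f : ℕ → ℕ) :
    (t.subst1 s).rename f = (t.rename (liftR f)).subst1 (s.rename f) := by
  simp only [subst1_def, rename_subst, subst_rename]
  congr 1
  funext n
  cases n <;> rfl

lemma subst_liftS_subst1 (t s : Tm) (σ : ℕ → Tm) :
    (t.subst (liftS σ)).subst1 s = t.subst (scons s σ) := by
  simp only [subst1_def, subst_subst]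
  congr 1
  funext n
  cases n with
  | zero => rfl
  | succ n =>
      show ((σ n).rename Nat.succ).subst (sub1 s) = σ n
      rw [subst_rename]
      exact subst_var (σ n)

end Tm
namespace Tm

lemma Step.rename_lift {t t' : Tm} (h : Step t t') : ∀ f, Step (t.rename f) (t'.rename f) := by
  induction h with
  | beta t s => intro f; rw [subst1_rename]; exact Step.beta _ _
  | proj1 t1 t2 => intro f; exact Step.proj1 _ _
  | proj2 t1 t2 => intro f; exact Step.proj2 _ _
  | pairApp t s u => intro f; exact Step.pairApp _ _ _
  | projLam1 t => intro f; exact Step.projLam1 _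
  | projLam2 t => intro f; exact Step.projLam2 _
  | lam_cong _ ih => intro f; exact Step.lam_cong (ih _)
  | appL _ ih => intro f; exact Step.appL (ih _)
  | appR _ ih => intro f; exact Step.appR (ih _)
  | pairL _ ih => intro f; exact Step.pairL (ih _)
  | pairR _ ih => intro f; exact Step.pairR (ih _)
  | p1_cong _ ih => intro f; exact Step.p1_cong (ih _)
  | p2_cong _ ih => intro f; exact Step.p2_cong (ih _)

lemma Step.subst_lift {t t' : Tm} (h : Step t t') : ∀ σ, Step (t.subst σ) (t'.subst σ) := by
  induction h with
  | beta t s => intro σ; rw [subst1_subst]; exact Step.beta _ _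
  | proj1 t1 t2 => intro σ; exact Step.proj1 _ _
  | proj2 t1 t2 => intro σ; exact Step.proj2 _ _
  | pairApp t s u => intro σ; exact Step.pairApp _ _ _
  | projLam1 t => intro σ; exact Step.projLam1 _
  | projLam2 t => intro σ; exact Step.projLam2 _
  | lam_cong _ ih => intro σ; exact Step.lam_cong (ih _)
  | appL _ ih => intro σ; exact Step.appL (ih _)
  | appR _ ih => intro σ; exact Step.appR (ih _)
  | pairL _ ih => intro σ; exact Step.pairL (ih _)
  | pairR _ ih => intro σ; exact Step.pairR (ih _)
  | p1_cong _ ih => intro σ; exact Step.p1_cong (ih _)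
  | p2_cong _ ih => intro σ; exact Step.p2_cong (ih _)

lemma Steps.map {g : Tm → Tm} (hg : ∀ {a b}, Step a b → Step (g a) (g b))
    {a b : Tm} (h : Steps a b) : Steps (g a) (g b) :=
  Relation.ReflTransGen.lift g (fun _ _ h => hg h) a b h

lemma steps_subst_mono (t : Tm) : ∀ {σ σ' : ℕ → Tm}, (∀ n, Steps (σ n) (σ' n)) →
    Steps (t.subst σ) (t.subst σ') := by
  induction t with
  | var n => intro σ σ' h; exact h n
  | lam t ih =>
      intro σ σ' h
      refine Steps.map (fun h => Step.lam_cong h) (ih ?_)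
      intro n
      cases n with
      | zero => exact Relation.ReflTransGen.refl
      | succ n => exact Steps.map (fun h => Step.rename_lift h Nat.succ) (h n)
  | app t s iht ihs =>
      intro σ σ' h
      exact Relation.ReflTransGen.trans
        (Steps.map (fun h => Step.appL h) (iht h))
        (Steps.map (fun h => Step.appR h) (ihs h))
  | pair t s iht ihs =>
      intro σ σ' h
      exact Relation.ReflTransGen.trans
        (Steps.map (fun h => Step.pairL h) (iht h))
        (Steps.map (fun h => Step.pairR h) (ihs h))
  | p1 t ih => intro σ σ' h; exact Steps.map (fun h => Step.p1_cong h) (ih h)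
  | p2 t ih => intro σ σ' h; exact Steps.map (fun h => Step.p2_cong h) (ih h)

lemma steps_subst1_right (t : Tm) {s s' : Tm} (h : Step s s') :
    Steps (t.subst1 s) (t.subst1 s') := by
  simp only [subst1_def]
  apply steps_subst_mono
  intro n
  cases n with
  | zero => exact Relation.ReflTransGen.single h
  | succ n => exact Relation.ReflTransGen.refl

lemma sn_step {t t' : Tm} (h : SN t) (hs : Step t t') : SN t' := h.inv hs

lemma sn_steps {t t' : Tm} (h : SN t) (hs : Steps t t') : SN t' := by
  induction hs with
  | refl => exact h
  | tail _ hstep ih => exact ih.inv hstep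

lemma sn_of_map {g : Tm → Tm} (hg : ∀ {a b}, Step a b → Step (g a) (g b))
    {t : Tm} (h : SN (g t)) : SN t := by
  have key : ∀ u : Tm, SN u → ∀ t : Tm, g t = u → SN t := by
    intro u hu
    induction hu with
    | intro u _ ih =>
        intro t e
        constructor
        intro t' ht'
        exact ih (g t') (e ▸ hg ht') t' rfl
  exact key _ h t rfl

lemma sn_appL {t s : Tm} (h : SN (app t s)) : SN t :=
  sn_of_map (fun h => Step.appL h) h

lemma sn_of_subst {t : Tm} (σ : ℕ → Tm) (h : SN (t.subst σ)) : SN t :=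
  sn_of_map (fun h => Step.subst_lift h σ) h

end Tm
open Tm in
lemma red_cr : ∀ A : Ty,
    (∀ t, Red A t → SN t) ∧ (∀ t t', Red A t → Step t t' → Red A t') ∧
    (∀ t, Neutral t → (∀ t', Step t t' → Red A t') → Red A t) := by
  intro A
  induction A with
  | base =>
      refine ⟨fun t h => h, fun t t' h hs => sn_step h hs, fun t _ h => ?_⟩
      exact Acc.intro t (fun t' hs => h t' hs)
  | arr A B ihA ihB =>
      obtain ⟨cr1A, cr2A, cr3A⟩ := ihA
      obtain ⟨cr1B, cr2B, cr3B⟩ := ihB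
      refine ⟨?_, ?_, ?_⟩
      · intro t h
        have hv : Red A (var 0) := cr3A _ trivial (fun t' hs => nomatch hs)
        exact sn_appL (cr1B _ (h _ hv))
      · intro t t' h hst s hs
        exact cr2B _ _ (h s hs) (Step.appL hst)
      · intro t hn h s hs
        have key : ∀ s, SN s → Red A s → Red B (app t s) := by
          intro s hsn
          induction hsn with
          | intro s _ ihs =>
              intro hs
              refine cr3B (app t s) trivial ?_
              intro u hu
              cases hu with
              | beta t0 s => exact hn.elim
              | pairApp => exact hn.elim
              | appL h' => exact h _ h' s hs
              | appR h' => exact ihs _ h' (cr2A _ _ hs h')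
        exact key s (cr1A s hs) hs
  | conj A B ihA ihB =>
      obtain ⟨cr1A, cr2A, cr3A⟩ := ihA
      obtain ⟨cr1B, cr2B, cr3B⟩ := ihB
      refine ⟨?_, ?_, ?_⟩
      · intro t h
        exact sn_of_map (fun h => Step.p1_cong h) (cr1A _ h.1)
      · intro t t' h hst
        exact ⟨cr2A _ _ h.1 (Step.p1_cong hst), cr2B _ _ h.2 (Step.p2_cong hst)⟩
      · intro t hn h
        constructor
        · refine cr3A (p1 t) trivial ?_
          intro u hu
          cases hu with
          | proj1 => exact hn.elim
          | projLam1 => exact hn.elim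
          | p1_cong h' => exact (h _ h').1
        · refine cr3B (p2 t) trivial ?_
          intro u hu
          cases hu with
          | proj2 => exact hn.elim
          | projLam2 => exact hn.elim
          | p2_cong h' => exact (h _ h').2

open Tm in
lemma cr1 (A : Ty) {t : Tm} (h : Red A t) : SN t := (red_cr A).1 t h
open Tm in
lemma cr2 (A : Ty) {t t' : Tm} (h : Red A t) (hs : Step t t') : Red A t' := (red_cr A).2.1 t t' h hs
open Tm in
lemma cr2s (A : Ty) {t t' : Tm} (h : Red A t) (hs : Tm.Steps t t') : Red A t' := by
  induction hs with
  | refl => exact h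
  | tail _ hstep ih => exact cr2 A ih hstep
open Tm in
lemma cr3 (A : Ty) {t : Tm} (hn : Neutral t) (h : ∀ t', Step t t' → Red A t') : Red A t :=
  (red_cr A).2.2 t hn h
open Tm in
lemma red_var (A : Ty) (n : ℕ) : Red A (var n) := cr3 A trivial (fun _ hs => nomatch hs)
open Tm in
lemma beta_exp (B : Ty) : ∀ t s : Tm, SN t → SN s → Red B (t.subst1 s) →
    Red B (app (lam t) s) := by
  intro t s ht
  induction ht generalizing s with
  | intro t _ iht =>
      intro hs
      induction hs with
      | intro s hsacc ihs =>
          intro hred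
          refine cr3 B (t := app (lam t) s) trivial ?_
          intro u hu
          cases hu with
          | beta => exact hred
          | appL h' =>
              cases h' with
              | lam_cong h'' =>
                  exact iht _ h'' s (Acc.intro s hsacc)
                    (cr2 B hred (Step.subst_lift h'' _))
          | appR h' =>
              exact ihs _ h' (cr2s B hred (steps_subst1_right t h'))

open Tm in
lemma pair_exp1 (A : Ty) : ∀ u v : Tm, SN u → SN v → Red A u → Red A (p1 (pair u v)) := by
  intro u v hu
  induction hu generalizing v with
  | intro u _ ihu =>
      intro hv
      induction hv with
      | intro v hvacc ihv =>
          intro hred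
          refine cr3 A (t := p1 (pair u v)) trivial ?_
          intro w hw
          cases hw with
          | proj1 => exact hred
          | p1_cong h' =>
              cases h' with
              | pairL h'' => exact ihu _ h'' v (Acc.intro v hvacc) (cr2 A hred h'')
              | pairR h'' => exact ihv _ h'' hred

open Tm in
lemma pair_exp2 (A : Ty) : ∀ u v : Tm, SN u → SN v → Red A v → Red A (p2 (pair u v)) := by
  intro u v hu
  induction hu generalizing v with
  | intro u _ ihu =>
      intro hv
      induction hv with
      | intro v hvacc ihv =>
          intro hred
          refine cr3 A (t := p2 (pair u v)) trivial ?_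
          intro w hw
          cases hw with
          | proj2 => exact hred
          | p2_cong h' =>
              cases h' with
              | pairL h'' => exact ihu _ h'' v (Acc.intro v hvacc) hred
              | pairR h'' => exact ihv _ h'' (cr2 A hred h'')

open Tm in
lemma distr_fwd1 (B : Ty) : ∀ t s : Tm, SN t → SN s → Red B (p1 (app t s)) →
    Red B (app (p1 t) s) := by
  intro t s ht
  induction ht generalizing s with
  | intro t _ iht =>
      intro hs
      induction hs with
      | intro s hsacc ihs =>
          intro hred
          refine cr3 B (t := app (p1 t) s) trivial ?_
          intro u hu
          cases hu with
          | appL h' =>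
              cases h' with
              | proj1 t1 t2 =>
                  exact cr2 B (cr2 B hred (Step.p1_cong (Step.pairApp _ _ _)))
                    (Step.proj1 _ _)
              | projLam1 t0 =>
                  refine beta_exp B (p1 t0) s ?_ (Acc.intro s hsacc) ?_
                  · have hr : Red B ((p1 t0).subst1 s) :=
                      cr2 B hred (Step.p1_cong (Step.beta _ _))
                    exact sn_of_subst _ (cr1 B hr)
                  · exact cr2 B hred (Step.p1_cong (Step.beta _ _))
              | p1_cong h'' =>
                  exact iht _ h'' _ (Acc.intro s hsacc)
                    (cr2 B hred (Step.p1_cong (Step.appL h'')))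
          | appR h' =>
              exact ihs _ h' (cr2 B hred (Step.p1_cong (Step.appR h')))

open Tm in
lemma distr_fwd2 (B : Ty) : ∀ t s : Tm, SN t → SN s → Red B (p2 (app t s)) →
    Red B (app (p2 t) s) := by
  intro t s ht
  induction ht generalizing s with
  | intro t _ iht =>
      intro hs
      induction hs with
      | intro s hsacc ihs =>
          intro hred
          refine cr3 B (t := app (p2 t) s) trivial ?_
          intro u hu
          cases hu with
          | appL h' =>
              cases h' with
              | proj2 t1 t2 =>
                  exact cr2 B (cr2 B hred (Step.p2_cong (Step.pairApp _ _ _)))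
                    (Step.proj2 _ _)
              | projLam2 t0 =>
                  refine beta_exp B (p2 t0) s ?_ (Acc.intro s hsacc) ?_
                  · have hr : Red B ((p2 t0).subst1 s) :=
                      cr2 B hred (Step.p2_cong (Step.beta _ _))
                    exact sn_of_subst _ (cr1 B hr)
                  · exact cr2 B hred (Step.p2_cong (Step.beta _ _))
              | p2_cong h'' =>
                  exact iht _ h'' _ (Acc.intro s hsacc)
                    (cr2 B hred (Step.p2_cong (Step.appL h'')))
          | appR h' =>
              exact ihs _ h' (cr2 B hred (Step.p2_cong (Step.appR h')))

open Tm in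
lemma distr_bwd1 (B : Ty) : ∀ t s : Tm, SN t → SN s → Red B (app (p1 t) s) →
    SN (app (p2 t) s) → Red B (p1 (app t s)) := by
  intro t s ht
  induction ht generalizing s with
  | intro t _ iht =>
      intro hs
      induction hs with
      | intro s hsacc ihs =>
          intro hred hsn2
          refine cr3 B (t := p1 (app t s)) trivial ?_
          intro u hu
          cases hu with
          | p1_cong h' =>
              cases h' with
              | beta t0 =>
                  exact cr2 B (cr2 B hred (Step.appL (Step.projLam1 _))) (Step.beta _ _)
              | pairApp t1 t2 =>
                  refine pair_exp1 B _ _ ?_ ?_ ?_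
                  · exact cr1 B (cr2 B hred (Step.appL (Step.proj1 _ _)))
                  · exact sn_step hsn2 (Step.appL (Step.proj2 _ _))
                  · exact cr2 B hred (Step.appL (Step.proj1 _ _))
              | appL h'' =>
                  exact iht _ h'' _ (Acc.intro s hsacc)
                    (cr2 B hred (Step.appL (Step.p1_cong h'')))
                    (sn_step hsn2 (Step.appL (Step.p2_cong h'')))
              | appR h'' =>
                  exact ihs _ h'' (cr2 B hred (Step.appR h'')) (sn_step hsn2 (Step.appR h''))

open Tm in
lemma distr_bwd2 (B : Ty) : ∀ t s : Tm, SN t → SN s → Red B (app (p2 t) s) →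
    SN (app (p1 t) s) → Red B (p2 (app t s)) := by
  intro t s ht
  induction ht generalizing s with
  | intro t _ iht =>
      intro hs
      induction hs with
      | intro s hsacc ihs =>
          intro hred hsn1
          refine cr3 B (t := p2 (app t s)) trivial ?_
          intro u hu
          cases hu with
          | p2_cong h' =>
              cases h' with
              | beta t0 =>
                  exact cr2 B (cr2 B hred (Step.appL (Step.projLam2 _))) (Step.beta _ _)
              | pairApp t1 t2 =>
                  refine pair_exp2 B _ _ ?_ ?_ ?_
                  · exact sn_step hsn1 (Step.appL (Step.proj1 _ _))
                  · exact cr1 B (cr2 B hred (Step.appL (Step.proj2 _ _)))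
                  · exact cr2 B hred (Step.appL (Step.proj2 _ _))
              | appL h'' =>
                  exact iht _ h'' _ (Acc.intro s hsacc)
                    (cr2 B hred (Step.appL (Step.p2_cong h'')))
                    (sn_step hsn1 (Step.appL (Step.p1_cong h'')))
              | appR h'' =>
                  exact ihs _ h'' (cr2 B hred (Step.appR h'')) (sn_step hsn1 (Step.appR h''))
open Tm in
lemma red_iso {A B : Ty} (h : Iso A B) : ∀ t, Red A t ↔ Red B t := by
  induction h with
  | refl A => exact fun t => Iff.rfl
  | symm _ ih => exact fun t => (ih t).symm
  | trans _ _ ih1 ih2 => exact fun t => (ih1 t).trans (ih2 t)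
  | arrL B _ ih =>
      intro t
      constructor
      · intro h s hs; exact h s ((ih s).mpr hs)
      · intro h s hs; exact h s ((ih s).mp hs)
  | arrR A _ ih =>
      intro t
      constructor
      · intro h s hs; exact (ih _).mp (h s hs)
      · intro h s hs; exact (ih _).mpr (h s hs)
  | conjL B _ ih =>
      exact fun t => and_congr_left (fun _ => ih _)
  | conjR A _ ih =>
      exact fun t => and_congr_right (fun _ => ih _)
  | distr A B C =>
      intro t
      constructor
      · intro h
        have hsnt : SN t := cr1 (Ty.arr A (Ty.conj B C)) h
        constructor
        · intro s hs
          exact distr_fwd1 B t s hsnt (cr1 A hs) (h s hs).1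
        · intro s hs
          exact distr_fwd2 C t s hsnt (cr1 A hs) (h s hs).2
      · intro h
        have hsnt : SN t := cr1 (Ty.conj (Ty.arr A B) (Ty.arr A C)) h
        intro s hs
        have h1 : Red B (app (p1 t) s) := h.1 s hs
        have h2 : Red C (app (p2 t) s) := h.2 s hs
        exact ⟨distr_bwd1 B t s hsnt (cr1 A hs) h1 (cr1 C h2),
               distr_bwd2 C t s hsnt (cr1 A hs) h2 (cr1 B h1)⟩

open Tm in
lemma fundamental {Γ : List Ty} {t : Tm} {A : Ty} (h : Typing Γ t A) :
    ∀ σ : ℕ → Tm, (∀ n B, Γ[n]? = some B → Red B (σ n)) → Red A (t.subst σ) := by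
  induction h with
  | var h => exact fun σ hσ => hσ _ _ h
  | @lam Γ t A B _ ih =>
      intro σ hσ
      intro s hs
      have hσ' : ∀ n C, (A :: Γ)[n]? = some C → Red C (scons s σ n) := by
        intro n C hn
        cases n with
        | zero => cases hn; exact hs
        | succ n => exact hσ n C hn
      have hred : Red B ((t.subst (liftS σ)).subst1 s) := by
        rw [subst_liftS_subst1]
        exact ih (scons s σ) hσ'
      refine beta_exp B _ s ?_ (cr1 A hs) hred
      exact sn_of_subst _ (cr1 B hred)
  | app _ _ ih1 ih2 =>
      exact fun σ hσ => ih1 σ hσ _ (ih2 σ hσ)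
  | @pair Γ t s A B _ _ ih1 ih2 =>
      intro σ hσ
      have h1 := ih1 σ hσ
      have h2 := ih2 σ hσ
      exact ⟨pair_exp1 A _ _ (cr1 A h1) (cr1 B h2) h1,
             pair_exp2 B _ _ (cr1 A h1) (cr1 B h2) h2⟩
  | p1 _ ih => exact fun σ hσ => (ih σ hσ).1
  | p2 _ ih => exact fun σ hσ => (ih σ hσ).2
  | iso _ hiso ih => exact fun σ hσ => (red_iso hiso _).mp (ih σ hσ)
theorem strong_normalization (Γ : List Ty) (t : Tm) (A : Ty) (h : Typing Γ t A) :
    Tm.SN t := by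
  have hred := fundamental h Tm.var (fun n B _ => red_var B n)
  rw [Tm.subst_var] at hred
  exact cr1 A hred
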